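/- Output-feedback controller recovery with direct feedthrough: under the setup of the output-feedback realization with (I - R)S = S(I - R) = I, if Φ_xx and the block S_yy - S_yx·Φ_xx⁻¹·Φ_xy are invertible, and K₀ := Φ_uy - Φ_ux·Φ_xx⁻¹·Φ_xy, then I - D·K = (S_yy - S_yx·Φ_xx⁻¹·Φ_xy)⁻¹ and K = K₀·(I + D·K₀)⁻¹. -/

import Mathlib

set_option synthInstance.maxHeartbeats 1000000
set_option maxHeartbeats 1000000

noncomputable section

/-- A rational function is proper if its numerator degree does not exceed its denominator
degree. -/
def RatFunc.Proper (r : RatFunc ℝ) : Prop := r.num.degree ≤ r.denom.degree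

/-- A 3×3 block matrix. -/
def blk3 {n m p α : Type*}
    (M11 : Matrix n n α) (M12 : Matrix n m α) (M13 : Matrix n p α)
    (M21 : Matrix m n α) (M22 : Matrix m m α) (M23 : Matrix m p α)
    (M31 : Matrix p n α) (M32 : Matrix p m α) (M33 : Matrix p p α) :
    Matrix (n ⊕ (m ⊕ p)) (n ⊕ (m ⊕ p)) α :=
  Matrix.fromBlocks M11 (Matrix.fromCols M12 M13) (Matrix.fromRows M21 M31)
    (Matrix.fromBlocks M22 M23 M32 M33)

section Aux
open Matrix
variable {m₁ m₂ nn R : Type*} [AddGroup R]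

lemma fromRows_add' (A₁ B₁ : Matrix m₁ nn R) (A₂ B₂ : Matrix m₂ nn R) :
    Matrix.fromRows A₁ A₂ + Matrix.fromRows B₁ B₂ = Matrix.fromRows (A₁ + B₁) (A₂ + B₂) := by
  ext (i | i) j <;> simp

lemma fromBlocks_sub' {n₁ n₂ : Type*} (A₁₁ B₁₁ : Matrix m₁ n₁ R) (A₁₂ B₁₂ : Matrix m₁ n₂ R)
    (A₂₁ B₂₁ : Matrix m₂ n₁ R) (A₂₂ B₂₂ : Matrix m₂ n₂ R) :
    Matrix.fromBlocks A₁₁ A₁₂ A₂₁ A₂₂ - Matrix.fromBlocks B₁₁ B₁₂ B₂₁ B₂₂ =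
      Matrix.fromBlocks (A₁₁ - B₁₁) (A₁₂ - B₁₂) (A₂₁ - B₂₁) (A₂₂ - B₂₂) := by
  ext (i | i) (j | j) <;> simp [Matrix.fromBlocks]

end Aux

/-- Output-feedback controller recovery with direct feedthrough: in the output-feedback
realization `R = [[A + (1-z)I, B, 0],[0, 0, K],[C, D, 0]]` with stability matrix `S` (blocks
`Φxx, Sxu, Φxy / Φux, Suu, Φuy / Syx, Syu, Syy`) satisfying `(I - R) S = S (I - R) = I`, if
`Φxx` and `Syy - Syx Φxx⁻¹ Φxy` are invertible, and `K₀ := Φuy - Φux Φxx⁻¹ Φxy`, then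
`I - D K = (Syy - Syx Φxx⁻¹ Φxy)⁻¹` and `K = K₀ (I + D K₀)⁻¹`. -/
theorem output_feedback_controller_recovery {n m p : Type*} [Fintype n] [Fintype m] [Fintype p]
    [DecidableEq n] [DecidableEq m] [DecidableEq p]
    (A : Matrix n n ℝ) (B : Matrix n m ℝ) (C : Matrix p n ℝ) (D : Matrix p m ℝ)
    (K : Matrix m p (RatFunc ℝ)) (hK : ∀ i j, (K i j).Proper)
    (Φxx : Matrix n n (RatFunc ℝ)) (Sxu : Matrix n m (RatFunc ℝ)) (Φxy : Matrix n p (RatFunc ℝ))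
    (Φux : Matrix m n (RatFunc ℝ)) (Suu : Matrix m m (RatFunc ℝ)) (Φuy : Matrix m p (RatFunc ℝ))
    (Syx : Matrix p n (RatFunc ℝ)) (Syu : Matrix p m (RatFunc ℝ)) (Syy : Matrix p p (RatFunc ℝ))
    (R : Matrix (n ⊕ (m ⊕ p)) (n ⊕ (m ⊕ p)) (RatFunc ℝ))
    (S : Matrix (n ⊕ (m ⊕ p)) (n ⊕ (m ⊕ p)) (RatFunc ℝ))
    (hR : R = blk3
      (A.map (algebraMap ℝ (RatFunc ℝ))
        + (1 - (RatFunc.X : RatFunc ℝ)) • (1 : Matrix n n (RatFunc ℝ)))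
      (B.map (algebraMap ℝ (RatFunc ℝ))) 0
      0 0 K
      (C.map (algebraMap ℝ (RatFunc ℝ))) (D.map (algebraMap ℝ (RatFunc ℝ))) 0)
    (hS : S = blk3 Φxx Sxu Φxy Φux Suu Φuy Syx Syu Syy)
    (h1 : (1 - R) * S = 1) (h2 : S * (1 - R) = 1)
    (hΦxx : IsUnit Φxx.det)
    (hYY : IsUnit (Syy - Syx * Φxx⁻¹ * Φxy).det)
    (K₀ : Matrix m p (RatFunc ℝ)) (hK₀ : K₀ = Φuy - Φux * Φxx⁻¹ * Φxy) :
    1 - D.map (algebraMap ℝ (RatFunc ℝ)) * K = (Syy - Syx * Φxx⁻¹ * Φxy)⁻¹ ∧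
    K = K₀ * (1 + D.map (algebraMap ℝ (RatFunc ℝ)) * K₀)⁻¹ := by
  classical
  set Ct := C.map (algebraMap ℝ (RatFunc ℝ)) with hCt
  set Dt := D.map (algebraMap ℝ (RatFunc ℝ)) with hDt
  have hM : (1 - R) = Matrix.fromBlocks
      (1 - (A.map (algebraMap ℝ (RatFunc ℝ))
        + (1 - (RatFunc.X : RatFunc ℝ)) • (1 : Matrix n n (RatFunc ℝ))))
      (Matrix.fromCols (-(B.map (algebraMap ℝ (RatFunc ℝ)))) 0)
      (Matrix.fromRows 0 (-Ct))
      (Matrix.fromBlocks 1 (-K) (-Dt) 1) := by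
    rw [hR]
    simp only [blk3]
    rw [show (1 : Matrix (n ⊕ (m ⊕ p)) (n ⊕ (m ⊕ p)) (RatFunc ℝ)) =
      Matrix.fromBlocks 1 0 0 1 from Matrix.fromBlocks_one.symm, fromBlocks_sub']
    refine Matrix.fromBlocks_inj.mpr ⟨rfl, ?_, ?_, ?_⟩
    · ext i (j | j) <;> simp
    · ext (i | i) j <;> simp
    · rw [show (1 : Matrix (m ⊕ p) (m ⊕ p) (RatFunc ℝ)) =
        Matrix.fromBlocks 1 0 0 1 from Matrix.fromBlocks_one.symm, fromBlocks_sub']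
      simp
  rw [hM, hS] at h1
  simp only [blk3] at h1
  rw [Matrix.fromBlocks_multiply,
    show (1 : Matrix (n ⊕ (m ⊕ p)) (n ⊕ (m ⊕ p)) (RatFunc ℝ)) =
      Matrix.fromBlocks 1 0 0 1 from Matrix.fromBlocks_one.symm] at h1
  obtain ⟨-, -, e21, e22⟩ := Matrix.fromBlocks_inj.mp h1
  -- block (2,1): gives Φux = K Syx  and  Syx = Ct Φxx + Dt Φux
  rw [Matrix.fromRows_mul, Matrix.fromBlocks_mul_fromRows, fromRows_add',
    show (0 : Matrix (m ⊕ p) n (RatFunc ℝ)) = Matrix.fromRows 0 0 from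
      Matrix.fromRows_zero.symm] at e21
  obtain ⟨eA, eB⟩ := Matrix.fromRows_inj e21
  -- block (2,2): gives Φuy = K Syy  and  Syy = 1 + Ct Φxy + Dt Φuy
  rw [Matrix.fromRows_mul_fromCols, Matrix.fromBlocks_multiply,
    Matrix.fromBlocks_add] at e22
  obtain ⟨-, eC, -, eD⟩ := Matrix.fromBlocks_inj.mp (e22.trans Matrix.fromBlocks_one.symm)
  simp only [Matrix.zero_mul, Matrix.one_mul, Matrix.neg_mul, zero_add] at eA eB eC eD
  have eA' : Φux = K * Syx := by
    have h : Φux - K * Syx = 0 := by rw [← eA]; abel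
    exact sub_eq_zero.mp h
  have eB' : Syx = Ct * Φxx + Dt * Φux := by
    have h : Syx - (Ct * Φxx + Dt * Φux) = 0 := by rw [← eB]; abel
    exact sub_eq_zero.mp h
  have eC' : Φuy = K * Syy := by
    have h : Φuy - K * Syy = 0 := by rw [← eC]; abel
    exact sub_eq_zero.mp h
  have eD' : Syy = 1 + Ct * Φxy + Dt * Φuy := by
    have h : Syy - (Ct * Φxy + Dt * Φuy) = 1 := by rw [← eD]; abel
    have h2 := eq_add_of_sub_eq h
    rw [h2]; abel
  have hinv : Φxx * Φxx⁻¹ = 1 := Matrix.mul_nonsing_inv _ hΦxx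
  have hxy : Φxx * (Φxx⁻¹ * Φxy) = Φxy := by
    rw [← Matrix.mul_assoc, hinv, Matrix.one_mul]
  have hY : Syy - Syx * Φxx⁻¹ * Φxy = 1 + Dt * K₀ := by
    rw [eD', eB', hK₀]
    simp only [Matrix.add_mul, Matrix.mul_sub, Matrix.mul_assoc, hxy]
    abel
  have hKY : K₀ = K * (Syy - Syx * Φxx⁻¹ * Φxy) := by
    rw [hK₀, eA', eC', Matrix.mul_sub]
    simp only [Matrix.mul_assoc]
  have hfix : (1 - Dt * K) * (Syy - Syx * Φxx⁻¹ * Φxy) = 1 := by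
    rw [Matrix.sub_mul, Matrix.one_mul, Matrix.mul_assoc Dt K, ← hKY, hY]
    abel
  constructor
  · exact (Matrix.inv_eq_left_inv hfix).symm
  · rw [← hY, hKY, Matrix.mul_assoc, Matrix.mul_nonsing_inv _ hYY, Matrix.mul_one]
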